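/- The asymptotic growth of the number b_n of vertices of BG_+(n) satisfies b_n = O(n · 2^(2^(n−1))). -/

import Mathlib

open Finset

def fval (n : ℕ) : ℕ :=
  (Finset.univ.filter (fun D : Finset (Finset (Fin n)) =>
    D.Nonempty ∧ (∀ S ∈ D, S ≠ ∅ ∧ S ≠ Finset.univ) ∧
      ∃ i : Fin n, ∀ S ∈ D, i ∈ S)).card

/-- The number of vertices of `BG_+(n)`. -/
def bval (n : ℕ) : ℕ := fval n + 1

lemma card_contains (n : ℕ) (i : Fin n) :
    (Finset.univ.filter (fun S : Finset (Fin n) => i ∈ S)).card = 2 ^ (n - 1) := by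
  have h : (Finset.univ.filter (fun S : Finset (Fin n) => i ∈ S)).card
      = ((Finset.univ.erase i).powerset).card := by
    apply Finset.card_nbij' (fun S => S.erase i) (fun S => insert i S)
    · intro S hS
      simp only [mem_coe, mem_powerset]
      intro x hx
      simp only [mem_erase] at hx ⊢
      exact ⟨hx.1, mem_univ _⟩
    · intro S hS
      simp only [mem_coe, mem_filter, mem_univ, true_and]
      exact mem_insert_self _ _
    · intro S hS
      simp only [mem_coe, mem_filter, mem_univ, true_and] at hS
      exact insert_erase hS
    · intro S hS
      simp only [mem_coe, mem_powerset] at hS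
      refine erase_insert ?_
      intro hi
      exact absurd (hS hi) (fun h => (mem_erase.mp h).1 rfl)
  rw [h, card_powerset, card_erase_of_mem (mem_univ i), Finset.card_univ, Fintype.card_fin]

lemma fval_le (n : ℕ) : fval n ≤ n * 2 ^ (2 ^ (n - 1)) := by
  have hsub : (Finset.univ.filter (fun D : Finset (Finset (Fin n)) =>
      D.Nonempty ∧ (∀ S ∈ D, S ≠ ∅ ∧ S ≠ Finset.univ) ∧
        ∃ i : Fin n, ∀ S ∈ D, i ∈ S)) ⊆
      Finset.univ.biUnion (fun i : Fin n =>
        (Finset.univ.filter (fun S : Finset (Fin n) => i ∈ S)).powerset) := by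
    intro D hD
    simp only [mem_filter] at hD
    obtain ⟨-, -, -, i, hi⟩ := hD
    refine mem_biUnion.mpr ⟨i, mem_univ _, ?_⟩
    simp only [mem_powerset]
    intro S hS
    simp only [mem_filter, mem_univ, true_and]
    exact hi S hS
  calc fval n ≤ (Finset.univ.biUnion (fun i : Fin n =>
        (Finset.univ.filter (fun S : Finset (Fin n) => i ∈ S)).powerset)).card :=
      Finset.card_le_card hsub
    _ ≤ ∑ i : Fin n, ((Finset.univ.filter (fun S : Finset (Fin n) => i ∈ S)).powerset).card :=
      Finset.card_biUnion_le
    _ = ∑ _i : Fin n, 2 ^ (2 ^ (n - 1)) := by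
      refine Finset.sum_congr rfl fun i _ => ?_
      rw [card_powerset, card_contains]
    _ = n * 2 ^ (2 ^ (n - 1)) := by simp [mul_comm]

/-- `b_n = O(n · 2^(2^(n-1)))`. -/
theorem bval_bigO :
    ∃ C n₀ : ℕ, ∀ n ≥ n₀, bval n ≤ C * (n * 2 ^ (2 ^ (n - 1))) := by
  refine ⟨2, 1, fun n hn => ?_⟩
  have h1 : 1 ≤ n * 2 ^ (2 ^ (n - 1)) :=
    Nat.one_le_iff_ne_zero.mpr (by positivity)
  calc bval n = fval n + 1 := rfl
    _ ≤ n * 2 ^ (2 ^ (n - 1)) + n * 2 ^ (2 ^ (n - 1)) := by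
      exact Nat.add_le_add (fval_le n) h1
    _ = 2 * (n * 2 ^ (2 ^ (n - 1))) := by ring
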